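/- Let g ≥ 1 and τ = (τ_{ij}) ∈ M_g(ℂ) with det(Im τ) ≠ 0. Then ρ(τ) ≥ 2g² − g − Σ_{1≤i<j≤g} 𝔡_{ij}(τ). Moreover, if F_τ is a finite extension of ℚ of degree 𝔡 := [F_τ : ℚ], then 𝔡_{ij}(τ) ≤ 𝔡 for all i < j, and consequently 2ρ(τ) ≥ 2g² − g(g−1)(𝔡 − 2). -/

import Mathlib

open Matrix Module IntermediateField
open scoped ComplexOrder

noncomputable section

/-- The period matrix `Π(τ) = (τ | I_g)`, a `g × 2g` complex matrix. -/
def PeriodMatrix (g : ℕ) (τ : Matrix (Fin g) (Fin g) ℂ) :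
    Matrix (Fin g) (Fin g ⊕ Fin g) ℂ :=
  Matrix.fromCols τ 1

/-- `F_τ`: the subfield of `ℂ` generated over `ℚ` by the entries of `τ`. -/
def EntryField (g : ℕ) (τ : Matrix (Fin g) (Fin g) ℂ) : IntermediateField ℚ ℂ :=
  IntermediateField.adjoin ℚ {x : ℂ | ∃ i j, τ i j = x}

/-- Entrywise inclusion `ℚ → ℂ` on square matrices, as an algebra homomorphism. -/
def mapQC (g : ℕ) : Matrix (Fin g) (Fin g) ℚ →ₐ[ℚ] Matrix (Fin g) (Fin g) ℂ :=
  (Algebra.ofId ℚ ℂ).mapMatrix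

/-- The ℚ-vector space `N(τ)` of triples `(A,B,C)` of rational `g × g` matrices with
`A, C` skew-symmetric and `A - Bτ + τᵗBᵗ + τᵗCτ = 0`; its dimension is the Picard
number of the complex torus `X_τ`. -/
def NSSpace (g : ℕ) (τ : Matrix (Fin g) (Fin g) ℂ) :
    Submodule ℚ (Matrix (Fin g) (Fin g) ℚ × Matrix (Fin g) (Fin g) ℚ ×
      Matrix (Fin g) (Fin g) ℚ) where
  carrier := {x | x.1ᵀ = -x.1 ∧ x.2.2ᵀ = -x.2.2 ∧
    mapQC g x.1 - mapQC g x.2.1 * τ + τᵀ * (mapQC g x.2.1)ᵀ + τᵀ * mapQC g x.2.2 * τ = 0}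
  add_mem' := by
    rintro a b ⟨ha1, ha2, ha3⟩ ⟨hb1, hb2, hb3⟩
    refine ⟨by simp [Matrix.transpose_add, ha1, hb1]; abel,
      by simp [Matrix.transpose_add, ha2, hb2]; abel, ?_⟩
    have key : mapQC g (a + b).1 - mapQC g (a + b).2.1 * τ + τᵀ * (mapQC g (a + b).2.1)ᵀ
        + τᵀ * mapQC g (a + b).2.2 * τ
        = (mapQC g a.1 - mapQC g a.2.1 * τ + τᵀ * (mapQC g a.2.1)ᵀ + τᵀ * mapQC g a.2.2 * τ)
        + (mapQC g b.1 - mapQC g b.2.1 * τ + τᵀ * (mapQC g b.2.1)ᵀ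
          + τᵀ * mapQC g b.2.2 * τ) := by
      simp only [Prod.fst_add, Prod.snd_add, map_add, Matrix.add_mul, Matrix.mul_add,
        Matrix.transpose_add]
      abel
    rw [key, ha3, hb3, add_zero]
  zero_mem' := by
    refine ⟨by simp, by simp, ?_⟩
    simp
  smul_mem' := by
    rintro q a ⟨ha1, ha2, ha3⟩
    refine ⟨by simp [Matrix.transpose_smul, ha1], by simp [Matrix.transpose_smul, ha2], ?_⟩
    have key : mapQC g (q • a).1 - mapQC g (q • a).2.1 * τ + τᵀ * (mapQC g (q • a).2.1)ᵀ
        + τᵀ * mapQC g (q • a).2.2 * τ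
        = q • (mapQC g a.1 - mapQC g a.2.1 * τ + τᵀ * (mapQC g a.2.1)ᵀ
          + τᵀ * mapQC g a.2.2 * τ) := by
      simp only [Prod.smul_fst, Prod.smul_snd, _root_.map_smul, Matrix.transpose_smul,
        smul_mul_assoc, mul_smul_comm]
      module
    rw [key, ha3, smul_zero]

/-- The Picard number `ρ(τ) = dim_ℚ N(τ)` of the complex torus `X_τ`. -/
def picard (g : ℕ) (τ : Matrix (Fin g) (Fin g) ℂ) : ℕ :=
  Module.finrank ℚ (NSSpace g τ)

/-- `d_{ij}(τ)`: the ℚ-dimension of the span in `ℂ` of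
`{1} ∪ {τ_{ki}} ∪ {τ_{kj}} ∪ {τ_{li}τ_{kj} − τ_{ki}τ_{lj}}`. -/
def dijDim (g : ℕ) (τ : Matrix (Fin g) (Fin g) ℂ) (i j : Fin g) : ℕ :=
  Module.finrank ℚ (Submodule.span ℚ
    (({1} ∪ {x | ∃ k, τ k i = x} ∪ {x | ∃ k, τ k j = x}
      ∪ {x | ∃ l k, τ l i * τ k j - τ k i * τ l j = x}) : Set ℂ))


namespace PicardAux

open Finset

/-! ### Counting pairs -/

lemma card_lt_eq_card_gt (g : ℕ) :
    (univ.filter (fun p : Fin g × Fin g => p.1 < p.2)).card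
      = (univ.filter (fun p : Fin g × Fin g => p.2 < p.1)).card := by
  apply Finset.card_bij' (fun p _ => Prod.swap p) (fun p _ => Prod.swap p) <;>
    simp [Finset.mem_filter]

lemma two_mul_cardP (g : ℕ) :
    2 * (univ.filter (fun p : Fin g × Fin g => p.1 < p.2)).card + g = g * g := by
  have h1 := Finset.card_filter_add_card_filter_not
    (s := (univ : Finset (Fin g × Fin g))) (p := fun p => p.1 < p.2)
  have h2 : (univ.filter (fun p : Fin g × Fin g => ¬ p.1 < p.2)).card
      = (univ.filter (fun p : Fin g × Fin g => p.2 < p.1)).card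
        + (univ.filter (fun p : Fin g × Fin g => p.1 = p.2)).card := by
    rw [← Finset.card_union_of_disjoint]
    · congr 1
      ext p
      simp only [Finset.mem_filter, Finset.mem_union, Finset.mem_univ, true_and, not_lt]
      constructor
      · rintro h; rcases lt_or_eq_of_le h with h | h
        · exact Or.inl h
        · exact Or.inr h.symm
      · rintro (h | h)
        · exact h.le
        · exact h.ge
    · simp only [Finset.disjoint_filter]
      intro p _ h h'
      exact absurd h' (ne_of_gt h)
  have h3 : (univ.filter (fun p : Fin g × Fin g => p.1 = p.2)).card = g := by
    have : (univ.filter (fun p : Fin g × Fin g => p.1 = p.2)) = Finset.diag univ := by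
      ext p; simp [Finset.mem_diag]
    rw [this, Finset.diag_card, Finset.card_univ, Fintype.card_fin]
  have h4 : (univ : Finset (Fin g × Fin g)).card = g * g := by
    simp [Finset.card_univ]
  rw [h2, h3, ← card_lt_eq_card_gt] at h1
  omega

lemma two_mul_cardQ (g : ℕ) :
    2 * (univ.filter (fun p : Fin g × Fin g => p.1 ≤ p.2)).card = g * g + g := by
  have hswap : (univ.filter (fun p : Fin g × Fin g => p.1 ≤ p.2)).card
      = (univ.filter (fun p : Fin g × Fin g => p.2 ≤ p.1)).card := by
    apply Finset.card_bij' (fun p _ => Prod.swap p) (fun p _ => Prod.swap p) <;>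
      simp [Finset.mem_filter]
  have hco : (univ.filter (fun p : Fin g × Fin g => p.2 ≤ p.1))
      = (univ.filter (fun p : Fin g × Fin g => ¬ p.1 < p.2)) := by
    ext p; simp [not_lt]
  have h1 := Finset.card_filter_add_card_filter_not
    (s := (univ : Finset (Fin g × Fin g))) (p := fun p => p.1 < p.2)
  have h4 : (univ : Finset (Fin g × Fin g)).card = g * g := by
    simp [Finset.card_univ]
  have h5 := two_mul_cardP g
  rw [hco] at hswap
  omega

/-! ### Matrix helpers -/

lemma mapQC_apply {g : ℕ} (A : Matrix (Fin g) (Fin g) ℚ) (i j : Fin g) :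
    mapQC g A i j = (A i j : ℂ) := rfl

lemma mapQC_transpose {g : ℕ} (A : Matrix (Fin g) (Fin g) ℚ) :
    (mapQC g A)ᵀ = mapQC g Aᵀ := by
  ext i j; rfl

/-- skew projection -/
def sk (g : ℕ) : Matrix (Fin g) (Fin g) ℚ →ₗ[ℚ] Matrix (Fin g) (Fin g) ℚ where
  toFun C := (1/2 : ℚ) • (C - Cᵀ)
  map_add' a b := by
    simp only [Matrix.transpose_add, smul_sub, smul_add]
    abel
  map_smul' q a := by
    simp only [Matrix.transpose_smul, RingHom.id_apply, smul_sub, smul_comm q]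

lemma sk_transpose {g : ℕ} (C : Matrix (Fin g) (Fin g) ℚ) : (sk g C)ᵀ = -(sk g C) := by
  simp only [sk, LinearMap.coe_mk, AddHom.coe_mk, Matrix.transpose_smul, Matrix.transpose_sub,
    Matrix.transpose_transpose, smul_sub]
  abel

lemma sk_of_skew {g : ℕ} {C : Matrix (Fin g) (Fin g) ℚ} (hC : Cᵀ = -C) : sk g C = C := by
  simp only [sk, LinearMap.coe_mk, AddHom.coe_mk, hC, sub_neg_eq_add]
  ext i j
  simp only [Matrix.smul_apply, Matrix.add_apply, smul_eq_mul]
  ring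

abbrev E (g : ℕ) := Matrix (Fin g) (Fin g) ℚ × Matrix (Fin g) (Fin g) ℚ ×
  Matrix (Fin g) (Fin g) ℚ

variable {g : ℕ} (τ : Matrix (Fin g) (Fin g) ℂ)

/-- the Riemann-relation expression, with skew-projected `C`, as a linear map. -/
def Mlin : E g →ₗ[ℚ] Matrix (Fin g) (Fin g) ℂ where
  toFun x := mapQC g x.1 - mapQC g x.2.1 * τ + τᵀ * (mapQC g x.2.1)ᵀ
    + τᵀ * mapQC g (sk g x.2.2) * τ
  map_add' a b := by
    simp only [Prod.fst_add, Prod.snd_add, map_add, Matrix.add_mul, Matrix.mul_add,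
      Matrix.transpose_add]
    abel
  map_smul' q a := by
    simp only [Prod.smul_fst, Prod.smul_snd, _root_.map_smul, Matrix.transpose_smul,
      smul_mul_assoc, mul_smul_comm, RingHom.id_apply]
    module

lemma Mlin_apply (x : E g) (i j : Fin g) :
    Mlin τ x i j = (x.1 i j : ℂ) - ∑ k, (x.2.1 i k : ℂ) * τ k j
      + ∑ k, τ k i * (x.2.1 j k : ℂ)
      + ∑ k, (∑ l, τ l i * ((sk g x.2.2) l k : ℂ)) * τ k j := by
  simp [Mlin, Matrix.sub_apply, Matrix.add_apply, Matrix.mul_apply, Matrix.transpose_apply,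
    mapQC_apply]

lemma Mlin_eq_of_skew (x : E g) (hC : x.2.2ᵀ = -x.2.2) :
    Mlin τ x = mapQC g x.1 - mapQC g x.2.1 * τ + τᵀ * (mapQC g x.2.1)ᵀ
      + τᵀ * mapQC g x.2.2 * τ := by
  simp only [Mlin, LinearMap.coe_mk, AddHom.coe_mk, sk_of_skew hC]

lemma Mlin_skew (x : E g) (hA : x.1ᵀ = -x.1) : (Mlin τ x)ᵀ = -(Mlin τ x) := by
  simp only [Mlin, LinearMap.coe_mk, AddHom.coe_mk, Matrix.transpose_add, Matrix.transpose_sub,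
    Matrix.transpose_mul, Matrix.transpose_transpose, mapQC_transpose, hA,
    sk_transpose, map_neg, Matrix.neg_mul, Matrix.mul_neg, neg_sub, neg_add, neg_neg,
    Matrix.mul_assoc]
  abel

/-! ### The target spans -/

def Sset (i j : Fin g) : Set ℂ :=
  (({1} ∪ {x | ∃ k, τ k i = x} ∪ {x | ∃ k, τ k j = x}
      ∪ {x | ∃ l k, τ l i * τ k j - τ k i * τ l j = x}) : Set ℂ)

lemma one_mem_Sset (i j : Fin g) : (1 : ℂ) ∈ Sset τ i j := by
  simp [Sset]

lemma left_mem_Sset (i j k : Fin g) : τ k i ∈ Sset τ i j := by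
  simp only [Sset, Set.mem_union, Set.mem_setOf_eq]
  exact Or.inl (Or.inl (Or.inr ⟨k, rfl⟩))

lemma right_mem_Sset (i j k : Fin g) : τ k j ∈ Sset τ i j := by
  simp only [Sset, Set.mem_union, Set.mem_setOf_eq]
  exact Or.inl (Or.inr ⟨k, rfl⟩)

lemma diff_mem_Sset (i j l k : Fin g) :
    τ l i * τ k j - τ k i * τ l j ∈ Sset τ i j := by
  simp only [Sset, Set.mem_union, Set.mem_setOf_eq]
  exact Or.inr ⟨l, k, rfl⟩

lemma Sset_finite (i j : Fin g) : (Sset τ i j).Finite := by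
  refine (((Set.finite_singleton 1).union ?_).union ?_).union ?_
  · have : {x | ∃ k, τ k i = x} = Set.range (fun k => τ k i) := rfl
    rw [this]; exact Set.finite_range _
  · have : {x | ∃ k, τ k j = x} = Set.range (fun k => τ k j) := rfl
    rw [this]; exact Set.finite_range _
  · have : {x | ∃ l k, τ l i * τ k j - τ k i * τ l j = x}
        = Set.range (fun p : Fin g × Fin g => τ p.1 i * τ p.2 j - τ p.2 i * τ p.1 j) := by
      ext x
      constructor
      · rintro ⟨l, k, rfl⟩; exact ⟨(l, k), rfl⟩
      · rintro ⟨⟨l, k⟩, rfl⟩; exact ⟨l, k, rfl⟩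
    rw [this]; exact Set.finite_range _

def Wsp (i j : Fin g) : Submodule ℚ ℂ := Submodule.span ℚ (Sset τ i j)

instance WspFD (i j : Fin g) : FiniteDimensional ℚ (Wsp τ i j) :=
  FiniteDimensional.span_of_finite ℚ (Sset_finite τ i j)

lemma dijDim_eq (i j : Fin g) : dijDim g τ i j = Module.finrank ℚ (Wsp τ i j) := rfl

/-! ### Membership of the entries -/

/-- key quadratic-term identity using skewness -/
lemma quad_eq {C : Matrix (Fin g) (Fin g) ℚ} (hC : Cᵀ = -C) (i j : Fin g) :
    ∑ k, (∑ l, τ l i * (C l k : ℂ)) * τ k j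
      = ∑ k, ∑ l, ((C l k / 2 : ℚ)) • (τ l i * τ k j - τ k i * τ l j) := by
  have hCC : ∀ a b, ((C a b : ℚ) : ℂ) = -((C b a : ℚ) : ℂ) := by
    intro a b
    have := congrFun (congrFun hC b) a
    simp only [Matrix.transpose_apply, Matrix.neg_apply] at this
    rw [this]; push_cast; ring
  have h1 : ∑ k, (∑ l, τ l i * (C l k : ℂ)) * τ k j
      = ∑ k, ∑ l, (C l k : ℂ) * (τ l i * τ k j) := by
    refine Finset.sum_congr rfl fun k _ => ?_
    rw [Finset.sum_mul]
    exact Finset.sum_congr rfl fun l _ => by ring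
  have h2 : ∑ k, ∑ l, ((C l k : ℂ)/2) * (τ k i * τ l j)
      = - ∑ k, ∑ l, ((C l k : ℂ)/2) * (τ l i * τ k j) := by
    rw [Finset.sum_comm, ← Finset.sum_neg_distrib]
    refine Finset.sum_congr rfl fun a _ => ?_
    rw [← Finset.sum_neg_distrib]
    refine Finset.sum_congr rfl fun b _ => ?_
    rw [hCC a b]; ring
  have h3 : ∑ k, ∑ l, ((C l k / 2 : ℚ)) • (τ l i * τ k j - τ k i * τ l j)
      = ∑ k, ∑ l, ((C l k : ℂ)/2) * (τ l i * τ k j)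
        - ∑ k, ∑ l, ((C l k : ℂ)/2) * (τ k i * τ l j) := by
    rw [← Finset.sum_sub_distrib]
    refine Finset.sum_congr rfl fun k _ => ?_
    rw [← Finset.sum_sub_distrib]
    refine Finset.sum_congr rfl fun l _ => ?_
    rw [Rat.smul_def]
    push_cast
    ring
  rw [h1, h3, h2]
  rw [← Finset.sum_neg_distrib, ← Finset.sum_sub_distrib]
  refine Finset.sum_congr rfl fun k _ => ?_
  simp only [← Finset.sum_neg_distrib, ← Finset.sum_sub_distrib]
  refine Finset.sum_congr rfl fun l _ => ?_
  ring

lemma entry_mem' {A B C : Matrix (Fin g) (Fin g) ℚ} (hC : Cᵀ = -C) (i j : Fin g)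
    (v : ℂ)
    (hv : v = (A i j : ℂ) - ∑ k, (B i k : ℂ) * τ k j + ∑ k, τ k i * (B j k : ℂ)
      + ∑ k, (∑ l, τ l i * (C l k : ℂ)) * τ k j) :
    v ∈ Wsp τ i j := by
  rw [hv, quad_eq τ hC]
  refine Submodule.add_mem _ (Submodule.add_mem _ (Submodule.sub_mem _ ?_ ?_) ?_) ?_
  · rw [show ((A i j : ℂ)) = (A i j : ℚ) • (1 : ℂ) by rw [Rat.smul_def, mul_one]]
    exact Submodule.smul_mem _ _ (Submodule.subset_span (one_mem_Sset τ i j))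
  · refine Submodule.sum_mem _ fun k _ => ?_
    rw [show ((B i k : ℂ)) * τ k j = (B i k : ℚ) • τ k j from (Rat.smul_def _ _).symm]
    exact Submodule.smul_mem _ _ (Submodule.subset_span (right_mem_Sset τ i j k))
  · refine Submodule.sum_mem _ fun k _ => ?_
    rw [show τ k i * ((B j k : ℂ)) = (B j k : ℚ) • τ k i by rw [Rat.smul_def]; ring]
    exact Submodule.smul_mem _ _ (Submodule.subset_span (left_mem_Sset τ i j k))
  · refine Submodule.sum_mem _ fun k _ => Submodule.sum_mem _ fun l _ => ?_
    exact Submodule.smul_mem _ _ (Submodule.subset_span (diff_mem_Sset τ i j l k))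

lemma entry_mem (x : E g) (i j : Fin g) : Mlin τ x i j ∈ Wsp τ i j :=
  entry_mem' τ (sk_transpose x.2.2) i j _ (Mlin_apply τ x i j)

/-! ### The linear map whose kernel is `NSSpace` -/

def Tmap : E g →ₗ[ℚ]
    ({p : Fin g × Fin g // p.1 ≤ p.2} → ℚ) × ({p : Fin g × Fin g // p.1 ≤ p.2} → ℚ) ×
      (∀ p : {p : Fin g × Fin g // p.1 < p.2}, Wsp τ p.1.1 p.1.2) where
  toFun x := (fun q => x.1 q.1.1 q.1.2 + x.1 q.1.2 q.1.1,
    fun q => x.2.2 q.1.1 q.1.2 + x.2.2 q.1.2 q.1.1,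
    fun p => ⟨Mlin τ x p.1.1 p.1.2, entry_mem τ x p.1.1 p.1.2⟩)
  map_add' a b := by
    refine Prod.ext ?_ (Prod.ext ?_ ?_)
    · funext q
      simp only [Prod.fst_add, Prod.snd_add, Pi.add_apply, Matrix.add_apply]
      ring
    · funext q
      simp only [Prod.fst_add, Prod.snd_add, Pi.add_apply, Matrix.add_apply]
      ring
    · funext p
      apply Subtype.ext
      simp only [Prod.fst_add, Prod.snd_add, Pi.add_apply, Submodule.coe_add]
      show Mlin τ (a + b) p.1.1 p.1.2 = Mlin τ a p.1.1 p.1.2 + Mlin τ b p.1.1 p.1.2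
      rw [LinearMap.map_add]
      rfl
  map_smul' q a := by
    refine Prod.ext ?_ (Prod.ext ?_ ?_)
    · funext r
      simp only [RingHom.id_apply, Prod.smul_fst, Prod.smul_snd, Pi.smul_apply,
        Matrix.smul_apply, smul_eq_mul]
      ring
    · funext r
      simp only [RingHom.id_apply, Prod.smul_fst, Prod.smul_snd, Pi.smul_apply,
        Matrix.smul_apply, smul_eq_mul]
      ring
    · funext p
      apply Subtype.ext
      simp only [RingHom.id_apply, Prod.smul_fst, Prod.smul_snd, Pi.smul_apply,
        SetLike.val_smul]
      show Mlin τ (q • a) p.1.1 p.1.2 = q • Mlin τ a p.1.1 p.1.2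
      rw [LinearMap.map_smul]
      rfl

lemma ker_Tmap : LinearMap.ker (Tmap τ) = NSSpace g τ := by
  ext x
  simp only [LinearMap.mem_ker]
  constructor
  · intro hx
    have h1 : ∀ q : {p : Fin g × Fin g // p.1 ≤ p.2},
        x.1 q.1.1 q.1.2 + x.1 q.1.2 q.1.1 = 0 :=
      fun q => congrFun (congrArg Prod.fst hx) q
    have h2 : ∀ q : {p : Fin g × Fin g // p.1 ≤ p.2},
        x.2.2 q.1.1 q.1.2 + x.2.2 q.1.2 q.1.1 = 0 :=
      fun q => congrFun (congrArg (fun y => y.2.1) hx) q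
    have h3 : ∀ p : {p : Fin g × Fin g // p.1 < p.2}, Mlin τ x p.1.1 p.1.2 = 0 :=
      fun p => congrArg Subtype.val (congrFun (congrArg (fun y => y.2.2) hx) p)
    have hA : x.1ᵀ = -x.1 := by
      ext i j
      simp only [Matrix.transpose_apply, Matrix.neg_apply]
      rcases le_total i j with h | h
      · have := h1 ⟨(i, j), h⟩; dsimp only at this; linarith
      · have := h1 ⟨(j, i), h⟩; dsimp only at this; linarith
    have hC : x.2.2ᵀ = -x.2.2 := by
      ext i j
      simp only [Matrix.transpose_apply, Matrix.neg_apply]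
      rcases le_total i j with h | h
      · have := h2 ⟨(i, j), h⟩; dsimp only at this; linarith
      · have := h2 ⟨(j, i), h⟩; dsimp only at this; linarith
    have hskew := Mlin_skew τ x hA
    have hM : Mlin τ x = 0 := by
      ext i j
      rw [Matrix.zero_apply]
      rcases lt_trichotomy i j with h | h | h
      · exact h3 ⟨(i, j), h⟩
      · subst h
        have hd := congrFun (congrFun hskew i) i
        simp only [Matrix.transpose_apply, Matrix.neg_apply] at hd
        linear_combination hd / 2
      · have hd := congrFun (congrFun hskew j) i
        simp only [Matrix.transpose_apply, Matrix.neg_apply] at hd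
        rw [hd, h3 ⟨(j, i), h⟩, neg_zero]
    refine ⟨hA, hC, ?_⟩
    rw [← Mlin_eq_of_skew τ x hC]
    exact hM
  · rintro ⟨hA, hC, h0⟩
    have hM : Mlin τ x = 0 := by rw [Mlin_eq_of_skew τ x hC]; exact h0
    refine Prod.ext ?_ (Prod.ext ?_ ?_)
    · funext q
      have := congrFun (congrFun hA q.1.2) q.1.1
      simp only [Matrix.transpose_apply, Matrix.neg_apply] at this
      show x.1 q.1.1 q.1.2 + x.1 q.1.2 q.1.1 = 0
      rw [this]; ring
    · funext q
      have := congrFun (congrFun hC q.1.2) q.1.1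
      simp only [Matrix.transpose_apply, Matrix.neg_apply] at this
      show x.2.2 q.1.1 q.1.2 + x.2.2 q.1.2 q.1.1 = 0
      rw [this]; ring
    · funext p
      apply Subtype.ext
      show Mlin τ x p.1.1 p.1.2 = 0
      rw [hM]
      rfl

end PicardAux

set_option maxHeartbeats 2000000 in
theorem picard_lower_bounds
    (g : ℕ) (hg : 1 ≤ g) (τ : Matrix (Fin g) (Fin g) ℂ)
    (him : (τ.map Complex.im).det ≠ 0) :
    ((2 * (g : ℤ) ^ 2 - g
        - ∑ p ∈ Finset.univ.filter (fun p : Fin g × Fin g => p.1 < p.2),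
            (dijDim g τ p.1 p.2 : ℤ))
      ≤ (picard g τ : ℤ)) ∧
    (FiniteDimensional ℚ (EntryField g τ) →
      (∀ i j : Fin g, i < j → dijDim g τ i j ≤ Module.finrank ℚ (EntryField g τ)) ∧
      (2 * (g : ℤ) ^ 2
          - (g : ℤ) * ((g : ℤ) - 1) * ((Module.finrank ℚ (EntryField g τ) : ℤ) - 2)
        ≤ 2 * (picard g τ : ℤ))) := by
  classical
  have hker := PicardAux.ker_Tmap τ
  have hpic : picard g τ = Module.finrank ℚ (LinearMap.ker (PicardAux.Tmap τ)) := by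
    rw [picard, hker]
  have hrn := LinearMap.finrank_range_add_finrank_ker (PicardAux.Tmap τ)
  have hdom : Module.finrank ℚ (PicardAux.E g) = 3 * (g * g) := by
    simp only [PicardAux.E, Module.finrank_prod, Module.finrank_matrix,
      Module.finrank_self, Fintype.card_fin, mul_one]
    ring
  rw [hdom] at hrn
  haveI hFDcod : FiniteDimensional ℚ
      (({p : Fin g × Fin g // p.1 ≤ p.2} → ℚ) × ({p : Fin g × Fin g // p.1 ≤ p.2} → ℚ) ×
        (∀ p : {p : Fin g × Fin g // p.1 < p.2}, PicardAux.Wsp τ p.1.1 p.1.2)) := by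
    infer_instance
  have hle := Submodule.finrank_le (LinearMap.range (PicardAux.Tmap τ))
  have hsum : (∑ p : {p : Fin g × Fin g // p.1 < p.2}, dijDim g τ p.1.1 p.1.2)
      = ∑ p ∈ Finset.univ.filter (fun p : Fin g × Fin g => p.1 < p.2),
          dijDim g τ p.1 p.2 :=
    (Finset.sum_subtype (p := fun p : Fin g × Fin g => p.1 < p.2) _ (fun x => by simp)
      (fun p => dijDim g τ p.1 p.2)).symm
  have hcod : Module.finrank ℚ
      (({p : Fin g × Fin g // p.1 ≤ p.2} → ℚ) × ({p : Fin g × Fin g // p.1 ≤ p.2} → ℚ) ×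
        (∀ p : {p : Fin g × Fin g // p.1 < p.2}, PicardAux.Wsp τ p.1.1 p.1.2))
      = (Finset.univ.filter (fun p : Fin g × Fin g => p.1 ≤ p.2)).card
        + ((Finset.univ.filter (fun p : Fin g × Fin g => p.1 ≤ p.2)).card
        + ∑ p ∈ Finset.univ.filter (fun p : Fin g × Fin g => p.1 < p.2),
            dijDim g τ p.1 p.2) := by
    rw [Module.finrank_prod, Module.finrank_prod, Module.finrank_pi,
      Module.finrank_pi_fintype, Fintype.card_subtype]
    simp only [← PicardAux.dijDim_eq]
    rw [hsum]
  rw [hcod] at hle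
  have hcQ := PicardAux.two_mul_cardQ g
  have hcP := PicardAux.two_mul_cardP g
  have hsq : ((g : ℤ))^2 = (g : ℤ) * g := by ring
  have part1 : (2 * (g : ℤ) ^ 2 - g
      - ∑ p ∈ Finset.univ.filter (fun p : Fin g × Fin g => p.1 < p.2),
          (dijDim g τ p.1 p.2 : ℤ)) ≤ (picard g τ : ℤ) := by
    have hcast : (∑ p ∈ Finset.univ.filter (fun p : Fin g × Fin g => p.1 < p.2),
        (dijDim g τ p.1 p.2 : ℤ))
        = ((∑ p ∈ Finset.univ.filter (fun p : Fin g × Fin g => p.1 < p.2),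
            dijDim g τ p.1 p.2 : ℕ) : ℤ) := by
      push_cast
      rfl
    rw [hpic, hsq, hcast]
    omega
  refine ⟨part1, fun hFD => ?_⟩
  haveI := hFD
  haveI : Module.Finite ℚ (EntryField g τ).toSubalgebra := hFD
  haveI : Module.Finite ℚ
      (Subalgebra.toSubmodule (EntryField g τ).toSubalgebra : Submodule ℚ ℂ) :=
    Module.Finite.equiv (Subalgebra.toSubmoduleEquiv _).symm
  have hbound : ∀ i j : Fin g, dijDim g τ i j ≤ Module.finrank ℚ (EntryField g τ) := by
    intro i j
    have hsub : PicardAux.Sset τ i j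
        ⊆ (Subalgebra.toSubmodule (EntryField g τ).toSubalgebra : Set ℂ) := by
      intro x hx
      have hmem : x ∈ EntryField g τ := by
        rcases hx with ((h | h) | h) | h
        · rw [Set.mem_singleton_iff] at h
          rw [h]
          exact one_mem _
        · obtain ⟨k, rfl⟩ := h
          exact IntermediateField.subset_adjoin ℚ _ ⟨k, i, rfl⟩
        · obtain ⟨k, rfl⟩ := h
          exact IntermediateField.subset_adjoin ℚ _ ⟨k, j, rfl⟩
        · obtain ⟨l, k, rfl⟩ := h
          exact sub_mem
            (mul_mem (IntermediateField.subset_adjoin ℚ _ ⟨l, i, rfl⟩)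
              (IntermediateField.subset_adjoin ℚ _ ⟨k, j, rfl⟩))
            (mul_mem (IntermediateField.subset_adjoin ℚ _ ⟨k, i, rfl⟩)
              (IntermediateField.subset_adjoin ℚ _ ⟨l, j, rfl⟩))
      simpa using hmem
    have hWle : PicardAux.Wsp τ i j
        ≤ Subalgebra.toSubmodule (EntryField g τ).toSubalgebra :=
      Submodule.span_le.2 hsub
    calc dijDim g τ i j
        = Module.finrank ℚ (PicardAux.Wsp τ i j) := rfl
      _ ≤ Module.finrank ℚ
            (Subalgebra.toSubmodule (EntryField g τ).toSubalgebra : Submodule ℚ ℂ) :=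
          Submodule.finrank_mono hWle
      _ = Module.finrank ℚ (EntryField g τ).toSubalgebra :=
          Subalgebra.finrank_toSubmodule _
      _ = Module.finrank ℚ (EntryField g τ) := rfl
  refine ⟨fun i j _ => hbound i j, ?_⟩
  have hsumle : ∑ p ∈ Finset.univ.filter (fun p : Fin g × Fin g => p.1 < p.2),
      dijDim g τ p.1 p.2
      ≤ (Finset.univ.filter (fun p : Fin g × Fin g => p.1 < p.2)).card
        * Module.finrank ℚ (EntryField g τ) := by
    calc ∑ p ∈ Finset.univ.filter (fun p : Fin g × Fin g => p.1 < p.2), dijDim g τ p.1 p.2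
        ≤ ∑ _p ∈ Finset.univ.filter (fun p : Fin g × Fin g => p.1 < p.2),
            Module.finrank ℚ (EntryField g τ) :=
          Finset.sum_le_sum fun p _ => hbound p.1 p.2
      _ = _ := by rw [Finset.sum_const, smul_eq_mul]
  have e1 : (∑ p ∈ Finset.univ.filter (fun p : Fin g × Fin g => p.1 < p.2),
      (dijDim g τ p.1 p.2 : ℤ))
      ≤ ((Finset.univ.filter (fun p : Fin g × Fin g => p.1 < p.2)).card : ℤ)
        * (Module.finrank ℚ (EntryField g τ) : ℤ) := by
    exact_mod_cast hsumle
  have e2 : 2 * ((Finset.univ.filter (fun p : Fin g × Fin g => p.1 < p.2)).card : ℤ)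
      = (g : ℤ) * g - g := by
    have : ((2 * (Finset.univ.filter (fun p : Fin g × Fin g => p.1 < p.2)).card + g : ℕ) : ℤ)
        = ((g * g : ℕ) : ℤ) := by exact_mod_cast congrArg (fun n : ℕ => (n : ℤ)) hcP
    push_cast at this
    linarith
  have e3 : 2 * ((Finset.univ.filter (fun p : Fin g × Fin g => p.1 < p.2)).card : ℤ)
        * (Module.finrank ℚ (EntryField g τ) : ℤ)
      = ((g : ℤ) * g - g) * (Module.finrank ℚ (EntryField g τ) : ℤ) := by
    rw [e2]
  nlinarith [part1, e1, e3, hsq]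

end
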